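/- If ζ^μ and ξ^μ are smooth vector fields on ℝ^D with D⁺_μ ζ_ν = 0 and D⁻_μ ξ_ν = 0 for all μ,ν, then for all μ: ∂_μ(ζ^ν G_{νρ} ξ^ρ) = −H_{μνρ} ζ^ν ξ^ρ. -/

import Mathlib

noncomputable section

/-- Partial derivative of `f` at `x` in the `μ`-th coordinate direction. -/
def pd {D : ℕ} (μ : Fin D) (f : (Fin D → ℝ) → ℝ) (x : Fin D → ℝ) : ℝ :=
  fderiv ℝ f x (Pi.single μ 1)

/-- A smooth real-valued function. -/
def Sm {D : ℕ} (f : (Fin D → ℝ) → ℝ) : Prop := ContDiff ℝ (⊤ : ℕ∞) f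

/-- A smooth vector field on `ℝ^D`. -/
def SmoothVF {D : ℕ} (V : (Fin D → ℝ) → Fin D → ℝ) : Prop := ∀ μ, Sm fun x => V x μ

/-- A smooth field of 2-tensors on `ℝ^D`. -/
def Smooth2T {D : ℕ} (T : (Fin D → ℝ) → Fin D → Fin D → ℝ) : Prop :=
  ∀ μ ν, Sm fun x => T x μ ν

/-- The connection coefficients `Γ_{μν,ρ} = ½(∂_μG_{νρ} + ∂_νG_{μρ} − ∂_ρG_{μν})`. -/
def Gam {D : ℕ} (G : (Fin D → ℝ) → Fin D → Fin D → ℝ) (μ ν ρ : Fin D) (x : Fin D → ℝ) : ℝ :=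
  (pd μ (fun y => G y ν ρ) x + pd ν (fun y => G y μ ρ) x - pd ρ (fun y => G y μ ν) x) / 2

/-- The torsion `H_{μνρ} = ∂_μB_{νρ} + ∂_νB_{ρμ} + ∂_ρB_{μν}`. -/
def Htor {D : ℕ} (B : (Fin D → ℝ) → Fin D → Fin D → ℝ) (μ ν ρ : Fin D) (x : Fin D → ℝ) : ℝ :=
  pd μ (fun y => B y ν ρ) x + pd ν (fun y => B y ρ μ) x + pd ρ (fun y => B y μ ν) x

/-- `Γ⁺_{μν,ρ} = Γ_{μν,ρ} + ½H_{μνρ}`. -/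
def GamP {D : ℕ} (G B : (Fin D → ℝ) → Fin D → Fin D → ℝ) (μ ν ρ : Fin D) (x : Fin D → ℝ) : ℝ :=
  Gam G μ ν ρ x + Htor B μ ν ρ x / 2

/-- `Γ⁻_{μν,ρ} = Γ_{μν,ρ} − ½H_{μνρ}`. -/
def GamM {D : ℕ} (G B : (Fin D → ℝ) → Fin D → Fin D → ℝ) (μ ν ρ : Fin D) (x : Fin D → ℝ) : ℝ :=
  Gam G μ ν ρ x - Htor B μ ν ρ x / 2

/-- The lowered components `V_μ = G_{μν}V^ν` of a vector field. -/
def lowerV {D : ℕ} (G : (Fin D → ℝ) → Fin D → Fin D → ℝ)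
    (V : (Fin D → ℝ) → Fin D → ℝ) (μ : Fin D) (x : Fin D → ℝ) : ℝ :=
  ∑ ν, G x μ ν * V x ν

/-- The covariant derivative `D⁺_μV_ν = G_{νρ}∂_μV^ρ + Γ⁺_{μρ,ν}V^ρ`. -/
def Dp {D : ℕ} (G B : (Fin D → ℝ) → Fin D → Fin D → ℝ)
    (V : (Fin D → ℝ) → Fin D → ℝ) (μ ν : Fin D) (x : Fin D → ℝ) : ℝ :=
  (∑ ρ, G x ν ρ * pd μ (fun y => V y ρ) x) + ∑ ρ, GamP G B μ ρ ν x * V x ρ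

/-- The covariant derivative `D⁻_μV_ν = G_{νρ}∂_μV^ρ + Γ⁻_{μρ,ν}V^ρ`. -/
def Dm {D : ℕ} (G B : (Fin D → ℝ) → Fin D → Fin D → ℝ)
    (V : (Fin D → ℝ) → Fin D → ℝ) (μ ν : Fin D) (x : Fin D → ℝ) : ℝ :=
  (∑ ρ, G x ν ρ * pd μ (fun y => V y ρ) x) + ∑ ρ, GamM G B μ ρ ν x * V x ρ

/-- The Lie derivative of the metric:
`(ℒ_ζG)_{μν} = ζ^ρ∂_ρG_{μν} + ∂_μζ^ρ·G_{ρν} + ∂_νζ^ρ·G_{μρ}`. -/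
def lieG {D : ℕ} (G : (Fin D → ℝ) → Fin D → Fin D → ℝ)
    (ζ : (Fin D → ℝ) → Fin D → ℝ) (μ ν : Fin D) (x : Fin D → ℝ) : ℝ :=
  (∑ ρ, ζ x ρ * pd ρ (fun y => G y μ ν) x)
    + (∑ ρ, pd μ (fun y => ζ y ρ) x * G x ρ ν)
    + ∑ ρ, pd ν (fun y => ζ y ρ) x * G x μ ρ

/-- A Killing pair `(ζ, b)`: `D⁻_μζ_ν + D⁺_νζ_μ + ∂_μb_ν − ∂_νb_μ = 0`. -/
def IsKillingPair {D : ℕ} (G B : (Fin D → ℝ) → Fin D → Fin D → ℝ)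
    (ζ b : (Fin D → ℝ) → Fin D → ℝ) : Prop :=
  ∀ (μ ν : Fin D) (x : Fin D → ℝ),
    Dm G B ζ μ ν x + Dp G B ζ ν μ x
      + pd μ (fun y => b y ν) x - pd ν (fun y => b y μ) x = 0

lemma pd_sum {D : ℕ} {ι : Type*} (s : Finset ι) (μ : Fin D)
    (f : ι → (Fin D → ℝ) → ℝ) (x : Fin D → ℝ)
    (hf : ∀ i ∈ s, DifferentiableAt ℝ (f i) x) :
    pd μ (fun y => ∑ i ∈ s, f i y) x = ∑ i ∈ s, pd μ (f i) x := by
  unfold pd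
  rw [fderiv_fun_sum hf]
  simp

lemma pd_mul {D : ℕ} (μ : Fin D) (f g : (Fin D → ℝ) → ℝ) (x : Fin D → ℝ)
    (hf : DifferentiableAt ℝ f x) (hg : DifferentiableAt ℝ g x) :
    pd μ (fun y => f y * g y) x = pd μ f x * g x + f x * pd μ g x := by
  unfold pd
  rw [fderiv_fun_mul hf hg]
  simp [mul_comm]
  ring

lemma pd_congr {D : ℕ} (μ : Fin D) (f g : (Fin D → ℝ) → ℝ) (x : Fin D → ℝ)
    (h : ∀ y, f y = g y) : pd μ f x = pd μ g x := by
  unfold pd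
  congr 1
  exact congrFun (congrArg _ (funext h)) x

lemma pd_neg {D : ℕ} (μ : Fin D) (f : (Fin D → ℝ) → ℝ) (x : Fin D → ℝ) :
    pd μ (fun y => -f y) x = -pd μ f x := by
  unfold pd
  rw [fderiv_fun_neg]
  simp

/-- For covariantly constant vector fields of opposite chirality,
`∂_μ(ζ^νG_{νρ}ξ^ρ) = −H_{μνρ}ζ^νξ^ρ`. -/
theorem stmt10 {D : ℕ} (hD : 1 ≤ D)
    (G B : (Fin D → ℝ) → Fin D → Fin D → ℝ)
    (hGs : Smooth2T G) (hGsym : ∀ x μ ν, G x μ ν = G x ν μ)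
    (hBs : Smooth2T B) (hBanti : ∀ x μ ν, B x μ ν = -B x ν μ)
    (ζ ξ : (Fin D → ℝ) → Fin D → ℝ) (hζ : SmoothVF ζ) (hξ : SmoothVF ξ)
    (h1 : ∀ μ ν x, Dp G B ζ μ ν x = 0) (h2 : ∀ μ ν x, Dm G B ξ μ ν x = 0) :
    ∀ μ x, pd μ (fun y => ∑ ν, ∑ ρ, ζ y ν * G y ν ρ * ξ y ρ) x
      = -∑ ν, ∑ ρ, Htor B μ ν ρ x * ζ x ν * ξ x ρ := by
  intro μ x
  have dG : ∀ ν ρ, DifferentiableAt ℝ (fun y => G y ν ρ) x :=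
    fun ν ρ => ((hGs ν ρ).differentiable (by simp)).differentiableAt
  have dζ : ∀ ν, DifferentiableAt ℝ (fun y => ζ y ν) x :=
    fun ν => ((hζ ν).differentiable (by simp)).differentiableAt
  have dξ : ∀ ν, DifferentiableAt ℝ (fun y => ξ y ν) x :=
    fun ν => ((hξ ν).differentiable (by simp)).differentiableAt
  -- symmetry facts for pd of G and B
  have pdGsym : ∀ (σ : Fin D) ν ρ, pd σ (fun y => G y ρ ν) x = pd σ (fun y => G y ν ρ) x :=
    fun σ ν ρ => pd_congr σ _ _ x (fun y => hGsym y ρ ν)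
  have pdBanti : ∀ (σ : Fin D) ν ρ, pd σ (fun y => B y ρ ν) x = -pd σ (fun y => B y ν ρ) x := by
    intro σ ν ρ
    rw [pd_congr σ _ (fun y => -B y ν ρ) x (fun y => hBanti y ρ ν), pd_neg]
  -- key Γ identity
  have hGam : ∀ ν ρ, GamP G B μ ν ρ x + GamM G B μ ρ ν x
      = pd μ (fun y => G y ν ρ) x + Htor B μ ν ρ x := by
    intro ν ρ
    unfold GamP GamM Gam Htor
    rw [pdBanti μ ν ρ, pdBanti ρ μ ν, pdBanti ν ρ μ, pdGsym μ ν ρ]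
    ring
  -- the covariant constancy equations, rearranged
  have hA : ∀ ρ, ∑ ν, G x ρ ν * pd μ (fun y => ζ y ν) x
      = -∑ ν, GamP G B μ ν ρ x * ζ x ν := by
    intro ρ
    have := h1 μ ρ x
    unfold Dp at this
    linarith
  have hC : ∀ ν, ∑ ρ, G x ν ρ * pd μ (fun y => ξ y ρ) x
      = -∑ ρ, GamM G B μ ρ ν x * ξ x ρ := by
    intro ν
    have := h2 μ ν x
    unfold Dm at this
    linarith
  -- expand the derivative with product and sum rules
  have step1 : pd μ (fun y => ∑ ν, ∑ ρ, ζ y ν * G y ν ρ * ξ y ρ) x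
      = ∑ ν, ∑ ρ, ((pd μ (fun y => ζ y ν) x * G x ν ρ
          + ζ x ν * pd μ (fun y => G y ν ρ) x) * ξ x ρ
          + ζ x ν * G x ν ρ * pd μ (fun y => ξ y ρ) x) := by
    rw [pd_sum _ μ _ x (fun ν _ => DifferentiableAt.fun_sum
      (fun ρ _ => (((dζ ν).fun_mul (dG ν ρ)).fun_mul (dξ ρ))))]
    refine Finset.sum_congr rfl fun ν _ => ?_
    rw [pd_sum _ μ _ x (fun ρ _ => ((dζ ν).fun_mul (dG ν ρ)).fun_mul (dξ ρ))]
    refine Finset.sum_congr rfl fun ρ _ => ?_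
    rw [pd_mul μ _ _ x ((dζ ν).fun_mul (dG ν ρ)) (dξ ρ), pd_mul μ _ _ x (dζ ν) (dG ν ρ)]
  rw [step1]
  -- now pure finite-sum algebra
  calc
    ∑ ν, ∑ ρ, ((pd μ (fun y => ζ y ν) x * G x ν ρ
          + ζ x ν * pd μ (fun y => G y ν ρ) x) * ξ x ρ
          + ζ x ν * G x ν ρ * pd μ (fun y => ξ y ρ) x)
        = (∑ ρ, (∑ ν, G x ρ ν * pd μ (fun y => ζ y ν) x) * ξ x ρ)
          + ((∑ ν, ∑ ρ, ζ x ν * pd μ (fun y => G y ν ρ) x * ξ x ρ)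
          + ∑ ν, ζ x ν * ∑ ρ, G x ν ρ * pd μ (fun y => ξ y ρ) x) := by
      simp only [Finset.sum_mul, Finset.mul_sum]
      rw [Finset.sum_comm (s := Finset.univ) (t := Finset.univ)
        (f := fun ρ ν => G x ρ ν * pd μ (fun y => ζ y ν) x * ξ x ρ)]
      rw [← Finset.sum_add_distrib, ← Finset.sum_add_distrib]
      refine Finset.sum_congr rfl fun ν _ => ?_
      rw [← Finset.sum_add_distrib, ← Finset.sum_add_distrib]
      refine Finset.sum_congr rfl fun ρ _ => ?_
      rw [hGsym x ρ ν]
      ring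
    _ = (∑ ρ, (-∑ ν, GamP G B μ ν ρ x * ζ x ν) * ξ x ρ)
          + ((∑ ν, ∑ ρ, ζ x ν * pd μ (fun y => G y ν ρ) x * ξ x ρ)
          + ∑ ν, ζ x ν * -∑ ρ, GamM G B μ ρ ν x * ξ x ρ) := by
      simp only [hA, hC]
    _ = -∑ ν, ∑ ρ, Htor B μ ν ρ x * ζ x ν * ξ x ρ := by
      have S1 : ∑ ρ, (-∑ ν, GamP G B μ ν ρ x * ζ x ν) * ξ x ρ
          = -∑ ν, ∑ ρ, GamP G B μ ν ρ x * ζ x ν * ξ x ρ := by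
        simp only [neg_mul, Finset.sum_mul, Finset.sum_neg_distrib]
        rw [Finset.sum_comm]
      have S3 : ∑ ν, ζ x ν * -∑ ρ, GamM G B μ ρ ν x * ξ x ρ
          = -∑ ν, ∑ ρ, GamM G B μ ρ ν x * ζ x ν * ξ x ρ := by
        simp only [mul_neg, Finset.sum_neg_distrib, Finset.mul_sum]
        rw [neg_inj]
        refine Finset.sum_congr rfl fun ν _ => Finset.sum_congr rfl fun ρ _ => ?_
        ring
      have final : (∑ ν, ∑ ρ, Htor B μ ν ρ x * ζ x ν * ξ x ρ)
          = (∑ ν, ∑ ρ, GamP G B μ ν ρ x * ζ x ν * ξ x ρ)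
            + (∑ ν, ∑ ρ, GamM G B μ ρ ν x * ζ x ν * ξ x ρ)
            - ∑ ν, ∑ ρ, ζ x ν * pd μ (fun y => G y ν ρ) x * ξ x ρ := by
        simp only [← Finset.sum_add_distrib, ← Finset.sum_sub_distrib]
        refine Finset.sum_congr rfl fun ν _ => Finset.sum_congr rfl fun ρ _ => ?_
        linear_combination (-(ζ x ν * ξ x ρ)) * hGam ν ρ
      rw [S1, S3, final]
      ring
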